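/- Let A and C be symmetric operators on a Hilbert space and D a linear subspace contained in both D(A) and D(C). If there exist constants 0 ≤ a < 1 and b ≥ 0 such that ‖(A−C)φ‖ ≤ a(‖Aφ‖ + ‖Cφ‖) + b‖φ‖ for all φ ∈ D, then A is essentially self-adjoint on D if and only if C is essentially self-adjoint on D, and in that case the closures of A restricted to D and C restricted to D have equal domains. -/

import Mathlib

open scoped InnerProductSpace

variable {H : Type*} [NormedAddCommGroup H] [InnerProductSpace ℂ H] [CompleteSpace H]

/-- A (partially defined, possibly unbounded) operator is symmetric if
`⟪A x, y⟫ = ⟪x, A y⟫` for all `x, y` in its domain. -/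
def LinearPMap.IsSymmetricOp (A : H →ₗ.[ℂ] H) : Prop :=
  ∀ x y : A.domain, ⟪A x, (y : H)⟫_ℂ = ⟪(x : H), A y⟫_ℂ

/-- `A` is essentially self-adjoint on a subspace `D` of its domain if the closure of the
restriction of `A` to `D` is self-adjoint. -/
noncomputable def EssentiallySelfAdjointOn (A : H →ₗ.[ℂ] H) (D : Submodule ℂ H) : Prop :=
  IsSelfAdjoint ((A.domRestrict D).closure)

section Aux

set_option maxHeartbeats 1000000

set_option linter.unusedSectionVars false

open LinearPMap Filter Topology

/-- If `η` acts like an adjoint value for `ψ`, then `(ψ, η)` is in the graph of the adjoint. -/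
lemma aux_mem_adjoint_graph {T : H →ₗ.[ℂ] H} (hT : Dense (T.domain : Set H)) {ψ η : H}
    (h : ∀ x : T.domain, ⟪η, (x : H)⟫_ℂ = ⟪ψ, T x⟫_ℂ) : (ψ, η) ∈ T.adjoint.graph := by
  
  have hψ : ψ ∈ T.adjoint.domain := T.mem_adjoint_domain_of_exists _ ⟨η, h⟩
  have heq : T.adjoint ⟨ψ, hψ⟩ = η := LinearPMap.adjoint_apply_eq hT ⟨ψ, hψ⟩ h
  rw [LinearPMap.mem_graph_iff]
  exact ⟨⟨ψ, hψ⟩, rfl, heq⟩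

lemma aux_graph_adjoint_inner {T : H →ₗ.[ℂ] H} (hT : Dense (T.domain : Set H)) {ψ η : H}
    (h : (ψ, η) ∈ T.adjoint.graph) : ∀ x : T.domain, ⟪η, (x : H)⟫_ℂ = ⟪ψ, T x⟫_ℂ := by
  
  rw [LinearPMap.mem_graph_iff] at h
  obtain ⟨u, hu1, hu2⟩ := h
  intro x
  have := (LinearPMap.adjoint_isFormalAdjoint hT) u x
  simp only at hu1 hu2
  rw [hu2, hu1] at this
  exact this

lemma aux_isSymm_of_selfAdjoint {R : H →ₗ.[ℂ] H} (hR : IsSelfAdjoint R) :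
    R.IsSymmetricOp := by
  
  have h' : R.adjoint = R := hR
  have hd : Dense (R.domain : Set H) := hR.dense_domain
  intro x y
  have hg : ((x : H), R x) ∈ R.adjoint.graph := by rw [h']; exact R.mem_graph x
  exact aux_graph_adjoint_inner hd hg y

lemma aux_mem_graph_of_inner {R : H →ₗ.[ℂ] H} (hR : IsSelfAdjoint R) {ψ η : H}
    (h : ∀ x : R.domain, ⟪η, (x : H)⟫_ℂ = ⟪ψ, R x⟫_ℂ) : (ψ, η) ∈ R.graph := by
  
  have h' : R.adjoint = R := hR
  rw [← h']
  exact aux_mem_adjoint_graph hR.dense_domain h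

/-- Symmetric evaluation through graphs. -/
lemma aux_symm_graph {T : H →ₗ.[ℂ] H} (hT : T.IsSymmetricOp) {x y u v : H}
    (hx : (x, u) ∈ T.graph) (hy : (y, v) ∈ T.graph) : ⟪u, y⟫_ℂ = ⟪x, v⟫_ℂ := by
  
  rw [LinearPMap.mem_graph_iff] at hx hy
  obtain ⟨x', hx1, hx2⟩ := hx
  obtain ⟨y', hy1, hy2⟩ := hy
  simp only at hx1 hx2 hy1 hy2
  rw [← hx1, ← hx2, ← hy1, ← hy2]
  exact hT x' y' 

lemma aux_adjoint_isClosed {T : H →ₗ.[ℂ] H} (hT : Dense (T.domain : Set H)) :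
    IsClosed (T.adjoint.graph : Set (H × H)) := by
  
  have hset : (T.adjoint.graph : Set (H × H)) =
      ⋂ x : T.domain, {p : H × H | ⟪p.2, (x : H)⟫_ℂ = ⟪p.1, T x⟫_ℂ} := by
    ext p
    simp only [Set.mem_iInter, Set.mem_setOf_eq, SetLike.mem_coe]
    exact ⟨fun hp x => aux_graph_adjoint_inner hT hp x,
      fun hp => aux_mem_adjoint_graph hT hp⟩
  rw [hset]
  refine isClosed_iInter fun x => isClosed_eq ?_ ?_
  · exact Continuous.inner continuous_snd continuous_const
  · exact Continuous.inner continuous_fst continuous_const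

lemma aux_symm_isClosable {T : H →ₗ.[ℂ] H} (hT : Dense (T.domain : Set H))
    (hsymm : T.IsSymmetricOp) : T.IsClosable := by
  
  have hle : T ≤ T.adjoint := LinearPMap.IsFormalAdjoint.le_adjoint hT hsymm
  exact LinearPMap.IsClosable.leIsClosable
    (LinearPMap.IsClosed.isClosable (aux_adjoint_isClosed hT)) hle

lemma aux_mem_closure_graph_iff {T : H →ₗ.[ℂ] H} (hT : T.IsClosable) (p : H × H) :
    p ∈ T.closure.graph ↔ p ∈ closure (T.graph : Set (H × H)) := by
  
  rw [← hT.graph_closure_eq_closure_graph]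
  exact Iff.rfl

lemma aux_closure_dom_subset (T : H →ₗ.[ℂ] H) :
    (T.closure.domain : Set H) ⊆ closure (T.domain : Set H) := by
  
  by_cases h : T.IsClosable
  · intro x hx
    have hmem : ((x : H), T.closure ⟨x, hx⟩) ∈ T.closure.graph :=
      T.closure.mem_graph ⟨x, hx⟩
    rw [aux_mem_closure_graph_iff h] at hmem
    have hmaps : Set.MapsTo (Prod.fst) (T.graph : Set (H × H)) (T.domain : Set H) := by
      intro p hp
      rw [SetLike.mem_coe, LinearPMap.mem_graph_iff] at hp
      obtain ⟨y, hy1, -⟩ := hp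
      rw [← hy1]
      exact y.2
    exact map_mem_closure continuous_fst hmem hmaps
  · rw [LinearPMap.closure_def' h]
    exact subset_closure

lemma aux_closure_symm {T : H →ₗ.[ℂ] H} (hsymm : T.IsSymmetricOp) (hcl : T.IsClosable) :
    T.closure.IsSymmetricOp := by
  
  intro x y
  have hx : ((x : H), T.closure x) ∈ closure (T.graph : Set (H × H)) := by
    rw [← aux_mem_closure_graph_iff hcl]; exact T.closure.mem_graph x
  have hy : ((y : H), T.closure y) ∈ closure (T.graph : Set (H × H)) := by
    rw [← aux_mem_closure_graph_iff hcl]; exact T.closure.mem_graph y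
  rw [mem_closure_iff_seq_limit] at hx hy
  obtain ⟨f, hf, hft⟩ := hx
  obtain ⟨g, hg, hgt⟩ := hy
  have hf1 : Tendsto (fun n => (f n).1) atTop (𝓝 (x : H)) :=
    (continuous_fst.tendsto _).comp hft
  have hf2 : Tendsto (fun n => (f n).2) atTop (𝓝 (T.closure x)) :=
    (continuous_snd.tendsto _).comp hft
  have hg1 : Tendsto (fun n => (g n).1) atTop (𝓝 (y : H)) :=
    (continuous_fst.tendsto _).comp hgt
  have hg2 : Tendsto (fun n => (g n).2) atTop (𝓝 (T.closure y)) :=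
    (continuous_snd.tendsto _).comp hgt
  have key : ∀ n m, ⟪(f n).2, (g m).1⟫_ℂ = ⟪(f n).1, (g m).2⟫_ℂ := by
    intro n m
    exact aux_symm_graph hsymm (by simpa using hf n) (by simpa using hg m)
  have step1 : ∀ n, ⟪(f n).2, (y : H)⟫_ℂ = ⟪(f n).1, T.closure y⟫_ℂ := by
    intro n
    have h1 : Tendsto (fun m => ⟪(f n).2, (g m).1⟫_ℂ) atTop (𝓝 ⟪(f n).2, (y : H)⟫_ℂ) :=
      Filter.Tendsto.inner tendsto_const_nhds hg1
    have h2 : Tendsto (fun m => ⟪(f n).1, (g m).2⟫_ℂ) atTop (𝓝 ⟪(f n).1, T.closure y⟫_ℂ) :=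
      Filter.Tendsto.inner tendsto_const_nhds hg2
    exact tendsto_nhds_unique (h1.congr fun m => key n m) h2
  have h1 : Tendsto (fun n => ⟪(f n).2, (y : H)⟫_ℂ) atTop (𝓝 ⟪T.closure x, (y : H)⟫_ℂ) :=
    Filter.Tendsto.inner hf2 tendsto_const_nhds
  have h2 : Tendsto (fun n => ⟪(f n).1, T.closure y⟫_ℂ) atTop (𝓝 ⟪(x : H), T.closure y⟫_ℂ) :=
    Filter.Tendsto.inner hf1 tendsto_const_nhds
  exact tendsto_nhds_unique h1 (h2.congr fun n => (step1 n).symm)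

lemma aux_norm_sq {R : H →ₗ.[ℂ] H} (hR : R.IsSymmetricOp) (t : ℝ) (x : R.domain) :
    ‖R x + ((t : ℂ) * Complex.I) • (x : H)‖ ^ 2 = ‖R x‖ ^ 2 + t ^ 2 * ‖(x : H)‖ ^ 2 := by
  
  have hc : (⟪R x, (x : H)⟫_ℂ).im = 0 := by
    have h2 : (starRingEnd ℂ) ⟪R x, (x : H)⟫_ℂ = ⟪R x, (x : H)⟫_ℂ := by
      rw [inner_conj_symm]
      exact (hR x x).symm
    exact Complex.conj_eq_iff_im.mp h2
  have hsq := norm_add_sq (𝕜 := ℂ) (R x) (((t : ℂ) * Complex.I) • (x : H))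
  rw [inner_smul_right] at hsq
  have hre : RCLike.re (((t : ℂ) * Complex.I) * ⟪R x, (x : H)⟫_ℂ) = 0 := by
    simp only [RCLike.re_to_complex]
    simp [Complex.mul_re, Complex.mul_im, hc]
  rw [hre] at hsq
  have hnorm : ‖((t : ℂ) * Complex.I) • (x : H)‖ = |t| * ‖(x : H)‖ := by
    rw [norm_smul]
    simp
  rw [hnorm] at hsq
  rw [hsq]
  rw [mul_pow, sq_abs]
  ring

lemma aux_surj {R : H →ₗ.[ℂ] H} (hR : IsSelfAdjoint R) (t : ℝ) (ht : t ≠ 0) (y : H) :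
    ∃ x : R.domain, R x + ((t : ℂ) * Complex.I) • (x : H) = y := by
  
  have hd : Dense (R.domain : Set H) := hR.dense_domain
  have hsymm : R.IsSymmetricOp := aux_isSymm_of_selfAdjoint hR
  set μ : ℂ := (t : ℂ) * Complex.I with hμ
  have hμ0 : μ ≠ 0 := by
    simp [hμ, Complex.ext_iff, ht]
  set f : R.domain →ₗ[ℂ] H := R.toFun + μ • (R.domain.subtype) with hf
  have hfx : ∀ x : R.domain, f x = R x + μ • (x : H) := fun x => rfl
  have hid : ∀ x : R.domain, ‖f x‖ ^ 2 = ‖R x‖ ^ 2 + t ^ 2 * ‖(x : H)‖ ^ 2 := by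
    intro x
    rw [hfx]
    exact aux_norm_sq hsymm t x
  have hle1 : ∀ x : R.domain, ‖R x‖ ≤ ‖f x‖ := by
    intro x
    have := hid x
    nlinarith [norm_nonneg (f x), norm_nonneg (R x), sq_nonneg (t * ‖(x : H)‖),
      sq_nonneg ‖(x : H)‖, sq_nonneg t, mul_nonneg (sq_nonneg t) (sq_nonneg ‖(x : H)‖)]
  have hle2 : ∀ x : R.domain, |t| * ‖(x : H)‖ ≤ ‖f x‖ := by
    intro x
    have := hid x
    have h1 : (|t| * ‖(x : H)‖) ^ 2 ≤ ‖f x‖ ^ 2 := by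
      rw [mul_pow, sq_abs]
      nlinarith [sq_nonneg ‖R x‖]
    have h2 : 0 ≤ |t| * ‖(x : H)‖ := mul_nonneg (abs_nonneg t) (norm_nonneg _)
    nlinarith [norm_nonneg (f x)]
  set K := LinearMap.range f with hK
  have hclosed : IsClosed (K : Set H) := by
    refine IsSeqClosed.isClosed ?_
    intro g z hg hgz
    choose xs hxs using fun n => LinearMap.mem_range.mp (hg n)
    have hgc : CauchySeq g := hgz.cauchySeq
    have hxc : CauchySeq (fun n => ((xs n : H))) := by
      rw [Metric.cauchySeq_iff] at hgc ⊢
      intro ε hε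
      obtain ⟨N, hN⟩ := hgc (|t| * ε) (by positivity)
      refine ⟨N, fun m hm n hn => ?_⟩
      have h1 : |t| * dist ((xs m : H)) ((xs n : H)) ≤ dist (g m) (g n) := by
        rw [dist_eq_norm, dist_eq_norm]
        calc |t| * ‖(xs m : H) - (xs n : H)‖
            = |t| * ‖((xs m - xs n : R.domain) : H)‖ := by norm_cast
          _ ≤ ‖f (xs m - xs n)‖ := hle2 _
          _ = ‖g m - g n‖ := by rw [LinearMap.map_sub, hxs m, hxs n]
      have h2 := hN m hm n hn
      have ht' : 0 < |t| := abs_pos.mpr ht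
      nlinarith [dist_nonneg (x := (xs m : H)) (y := (xs n : H))]
    obtain ⟨xhat, hxhat⟩ := cauchySeq_tendsto_of_complete hxc
    have hRx : Tendsto (fun n => R (xs n)) atTop (𝓝 (z - μ • xhat)) := by
      have heq : ∀ n, R (xs n) = g n - μ • ((xs n : H)) := by
        intro n
        rw [← hxs n, hfx]
        abel
      exact (hgz.sub (hxhat.const_smul μ)).congr fun n => (heq n).symm
    have hmem : (xhat, z - μ • xhat) ∈ R.graph := by
      apply aux_mem_graph_of_inner hR
      intro v
      have h1 : Tendsto (fun n => ⟪R (xs n), (v : H)⟫_ℂ) atTop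
          (𝓝 ⟪z - μ • xhat, (v : H)⟫_ℂ) := Filter.Tendsto.inner hRx tendsto_const_nhds
      have h2 : Tendsto (fun n => ⟪((xs n : H)), R v⟫_ℂ) atTop
          (𝓝 ⟪xhat, R v⟫_ℂ) := Filter.Tendsto.inner hxhat tendsto_const_nhds
      exact tendsto_nhds_unique (h1.congr fun n => hsymm (xs n) v) h2
    rw [LinearPMap.mem_graph_iff] at hmem
    obtain ⟨u, hu1, hu2⟩ := hmem
    simp only at hu1 hu2
    refine LinearMap.mem_range.mpr ⟨u, ?_⟩
    rw [hfx, hu2, hu1]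
    abel
  have horth : Kᗮ = ⊥ := by
    rw [Submodule.eq_bot_iff]
    intro u hu
    have hinner : ∀ x : R.domain, ⟪R x + μ • (x : H), u⟫_ℂ = 0 := by
      intro x
      have := (Submodule.mem_orthogonal K u).mp hu (f x) (LinearMap.mem_range_self f x)
      rwa [hfx] at this
    have hconjμ : (starRingEnd ℂ) μ = -μ := by
      simp [hμ, Complex.ext_iff]
    have hmem : (u, μ • u) ∈ R.graph := by
      apply aux_mem_graph_of_inner hR
      intro x
      have h0 := hinner x
      rw [inner_add_left, inner_smul_left, hconjμ] at h0
      have h1 : ⟪R x, u⟫_ℂ = μ * ⟪(x : H), u⟫_ℂ := by linear_combination h0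
      have h2 := congrArg (starRingEnd ℂ) h1
      rw [map_mul, inner_conj_symm, inner_conj_symm, hconjμ] at h2
      rw [inner_smul_left, hconjμ]
      exact h2.symm
    rw [LinearPMap.mem_graph_iff] at hmem
    obtain ⟨w, hw1, hw2⟩ := hmem
    simp only at hw1 hw2
    have hsy := hsymm w w
    rw [hw2, hw1] at hsy
    rw [inner_smul_left, inner_smul_right, hconjμ] at hsy
    have hzero : ⟪u, u⟫_ℂ = 0 := by
      have : (2 * μ) * ⟪u, u⟫_ℂ = 0 := by linear_combination (-1 : ℂ) * hsy
      rcases mul_eq_zero.mp this with h | h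
      · exact absurd h (by simpa using hμ0)
      · exact h
    have hu0 : u = 0 := inner_self_eq_zero.mp hzero
    exact hu0
  have hKtop : K = ⊤ := by
    haveI : CompleteSpace K := hclosed.completeSpace_coe
    rwa [Submodule.orthogonal_eq_bot_iff] at horth
  have hy : y ∈ K := by rw [hKtop]; trivial
  obtain ⟨x, hx⟩ := LinearMap.mem_range.mp hy
  exact ⟨x, by rw [← hfx]; exact hx⟩

lemma aux_criterion {P : H →ₗ.[ℂ] H} (hdense : Dense (P.domain : Set H))
    (hsymm : P.IsSymmetricOp) (t : ℝ) (ht : t ≠ 0)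
    (hplus : ∀ y, ∃ x : P.domain, P x + ((t : ℂ) * Complex.I) • (x : H) = y)
    (hminus : ∀ y, ∃ x : P.domain, P x - ((t : ℂ) * Complex.I) • (x : H) = y) :
    IsSelfAdjoint P := by
  
  set μ : ℂ := (t : ℂ) * Complex.I with hμ
  have hμ0 : μ ≠ 0 := by simp [hμ, Complex.ext_iff, ht]
  have hconjμ : (starRingEnd ℂ) μ = -μ := by simp [hμ, Complex.ext_iff]
  have hsymm' : P.IsFormalAdjoint P := hsymm
  have hle : P ≤ P.adjoint := LinearPMap.IsFormalAdjoint.le_adjoint hdense hsymm'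
  have hdomsub : P.adjoint.domain ≤ P.domain := by
    intro ψ hψ
    set ψ' : P.adjoint.domain := ⟨ψ, hψ⟩ with hψ'
    obtain ⟨x, hx⟩ := hplus (P.adjoint ψ' + μ • ψ)
    have hxd : (x : H) ∈ P.adjoint.domain := hle.1 x.2
    set x'' : P.adjoint.domain := ⟨(x : H), hxd⟩ with hx''
    have hPx : P.adjoint x'' = P x := (hle.2 (x := x) (y := x'') rfl).symm
    set u' : P.adjoint.domain := ψ' - x'' with hu'
    have hucoe : (u' : H) = ψ - (x : H) := rfl
    have hPu' : P.adjoint u' = -μ • (u' : H) := by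
      have h1 : P.adjoint u' = P.adjoint ψ' - P.adjoint x'' := LinearPMap.map_sub _ _ _
      rw [h1, hPx]
      have h2 : P x = P.adjoint ψ' + μ • ψ - μ • (x : H) := by
        rw [← hx]; abel
      rw [h2, hucoe]
      module
    have hu0 : ∀ v : P.domain, ⟪(u' : H), P v - μ • (v : H)⟫_ℂ = 0 := by
      intro v
      have hfa := LinearPMap.adjoint_isFormalAdjoint hdense u' v
      rw [hPu'] at hfa
      rw [inner_sub_right, inner_smul_right, ← hfa, inner_smul_left, _root_.map_neg, hconjμ]
      ring
    have hueq : (u' : H) = 0 := by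
      obtain ⟨w, hw⟩ := hminus (u' : H)
      have h3 := hu0 w
      rw [hw] at h3
      exact inner_self_eq_zero.mp h3
    have hψx : ψ = (x : H) := by
      rw [hucoe] at hueq
      have := sub_eq_zero.mp hueq
      exact this
    rw [hψx]
    exact x.2
  have hdomeq : P.domain = P.adjoint.domain := le_antisymm hle.1 hdomsub
  have hfinal : P = P.adjoint := LinearPMap.eq_of_le_of_domain_eq hle hdomeq
  exact hfinal.symm

lemma aux_kato_step {R : H →ₗ.[ℂ] H} (hR : IsSelfAdjoint R) (W : R.domain →ₗ[ℂ] H)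
    (hWsymm : ∀ x y : R.domain, ⟪W x, (y : H)⟫_ℂ = ⟪(x : H), W y⟫_ℂ)
    {α β : ℝ} (hα0 : 0 ≤ α) (hα : α < 1) (hβ : 0 ≤ β)
    (hW : ∀ x : R.domain, ‖W x‖ ≤ α * ‖R x‖ + β * ‖(x : H)‖) :
    IsSelfAdjoint (LinearPMap.mk R.domain (R.toFun + W)) := by
  
  have hd : Dense (R.domain : Set H) := hR.dense_domain
  have hRsymm : R.IsSymmetricOp := aux_isSymm_of_selfAdjoint hR
  set P : H →ₗ.[ℂ] H := LinearPMap.mk R.domain (R.toFun + W) with hPdef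
  have hPapp : ∀ x : P.domain, P x = R x + W x := fun x => rfl
  have hPsymm : P.IsSymmetricOp := by
    intro x y
    rw [hPapp x, hPapp y, inner_add_left, inner_add_right, hRsymm x y, hWsymm x y]
  have hPdense : Dense (P.domain : Set H) := hd
  set t : ℝ := β / (1 - α) + 1 with htdef
  have h1α : 0 < 1 - α := by linarith
  have ht0 : 0 < t := by positivity
  have hβt : β / t < 1 - α := by
    rw [div_lt_iff₀ ht0]
    have : (1 - α) * t = β + (1 - α) := by
      rw [htdef, mul_add, mul_div_assoc', mul_comm (1 - α) β, mul_div_assoc, div_self h1α.ne', mul_one, mul_one]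
    nlinarith
  set γ : ℝ := α + β / t with hγdef
  have hγ1 : γ < 1 := by rw [hγdef]; linarith
  have hγ0 : 0 ≤ γ := by rw [hγdef]; positivity
  have hsurj : ∀ s : ℝ, |s| = t → ∀ y : H,
      ∃ x : R.domain, R x + W x + ((s : ℂ) * Complex.I) • (x : H) = y := by
    intro s hs y
    have hs0 : s ≠ 0 := by
      intro h
      rw [h, abs_zero] at hs
      linarith
    choose inv hinv using aux_surj hR s hs0
    have hid : ∀ x : R.domain, ‖R x + ((s : ℂ) * Complex.I) • (x : H)‖ ^ 2
        = ‖R x‖ ^ 2 + s ^ 2 * ‖(x : H)‖ ^ 2 := fun x => aux_norm_sq hRsymm s x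
    have hle1 : ∀ x : R.domain, ‖R x‖ ≤ ‖R x + ((s : ℂ) * Complex.I) • (x : H)‖ := by
      intro x
      have := hid x
      nlinarith [norm_nonneg (R x + ((s : ℂ) * Complex.I) • (x : H)), norm_nonneg (R x),
        mul_nonneg (sq_nonneg s) (sq_nonneg ‖(x : H)‖)]
    have hle2 : ∀ x : R.domain, |s| * ‖(x : H)‖ ≤ ‖R x + ((s : ℂ) * Complex.I) • (x : H)‖ := by
      intro x
      have h1 := hid x
      have h2 : 0 ≤ |s| * ‖(x : H)‖ := mul_nonneg (abs_nonneg s) (norm_nonneg _)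
      nlinarith [norm_nonneg (R x + ((s : ℂ) * Complex.I) • (x : H)), sq_nonneg ‖R x‖, sq_abs s]
    set g : H → H := fun z => y - W (inv z) with hg
    have hkey : ∀ z₁ z₂ : H, dist (g z₁) (g z₂) ≤ γ * dist z₁ z₂ := by
      intro z₁ z₂
      set u : R.domain := inv z₁ - inv z₂ with hu
      have hfu : R u + ((s : ℂ) * Complex.I) • (u : H) = z₁ - z₂ := by
        have h1 : R u = R (inv z₁) - R (inv z₂) := LinearPMap.map_sub _ _ _
        have h2 : ((u : H)) = (inv z₁ : H) - (inv z₂ : H) := rfl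
        have hkey2 : (R (inv z₁) + ((s : ℂ) * Complex.I) • ((inv z₁ : H)))
            - (R (inv z₂) + ((s : ℂ) * Complex.I) • ((inv z₂ : H))) = z₁ - z₂ := by
          rw [hinv z₁, hinv z₂]
        rw [h1, h2, smul_sub, ← hkey2]
        abel
      have hdg : dist (g z₁) (g z₂) = ‖W u‖ := by
        rw [hg, dist_eq_norm]
        simp only
        rw [sub_sub_sub_cancel_left, ← LinearMap.map_sub, ← norm_neg, ← LinearMap.map_neg]
        congr 1
        congr 1
        rw [hu]
        abel
      have hbu : ‖W u‖ ≤ α * ‖R u‖ + β * ‖(u : H)‖ := hW u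
      have hRu : ‖R u‖ ≤ ‖z₁ - z₂‖ := by
        have := hle1 u
        rw [hfu] at this
        exact this
      have hnu : |s| * ‖(u : H)‖ ≤ ‖z₁ - z₂‖ := by
        have := hle2 u
        rw [hfu] at this
        exact this
      have hnu' : ‖(u : H)‖ ≤ ‖z₁ - z₂‖ / t := by
        rw [le_div_iff₀ ht0, mul_comm]
        rw [← hs]
        exact hnu
      rw [hdg, dist_eq_norm]
      calc ‖W u‖ ≤ α * ‖R u‖ + β * ‖(u : H)‖ := hbu
        _ ≤ α * ‖z₁ - z₂‖ + β * (‖z₁ - z₂‖ / t) :=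
            add_le_add (mul_le_mul_of_nonneg_left hRu hα0)
              (mul_le_mul_of_nonneg_left hnu' hβ)
        _ = γ * ‖z₁ - z₂‖ := by
            rw [hγdef]
            field_simp
    have hlip : LipschitzWith (Real.toNNReal γ) g :=
      LipschitzWith.of_dist_le_mul fun z₁ z₂ => by
        rw [Real.coe_toNNReal γ hγ0]
        exact hkey z₁ z₂
    have hcontr : ContractingWith (Real.toNNReal γ) g := by
      constructor
      · have : (Real.toNNReal γ : ℝ) < 1 := by
          rw [Real.coe_toNNReal γ hγ0]
          exact hγ1
        exact_mod_cast this
      · exact hlip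
    obtain ⟨zstar, hfix, -⟩ := hcontr.exists_fixedPoint y (edist_ne_top _ _)
    replace hfix : g zstar = zstar := hfix
    refine ⟨inv zstar, ?_⟩
    have h3 : R (inv zstar) + ((s : ℂ) * Complex.I) • ((inv zstar : H)) = zstar := hinv zstar
    have h4 : W (inv zstar) = y - zstar := by
      have h5 : y - W (inv zstar) = zstar := hfix
      have h6 : y - (y - W (inv zstar)) = y - zstar := by rw [h5]
      rw [← h6]
      abel
    calc R (inv zstar) + W (inv zstar) + ((s : ℂ) * Complex.I) • ((inv zstar : H))
        = (R (inv zstar) + ((s : ℂ) * Complex.I) • ((inv zstar : H))) + W (inv zstar) := by abel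
      _ = zstar + (y - zstar) := by rw [h3, h4]
      _ = y := by abel
  apply aux_criterion hPdense hPsymm t (ne_of_gt ht0)
  · intro y
    obtain ⟨x, hx⟩ := hsurj t (abs_of_pos ht0) y
    exact ⟨x, hx⟩
  · intro y
    obtain ⟨x, hx⟩ := hsurj (-t) (by rw [abs_neg]; exact abs_of_pos ht0) y
    refine ⟨x, ?_⟩
    rw [← hx]
    have hco : ((-t : ℝ) : ℂ) = -(t : ℂ) := by push_cast; ring
    rw [hco, neg_mul, neg_smul]
    show R x + W x - ((t : ℂ) * Complex.I) • (x : H)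
      = R x + W x + -(((t : ℂ) * Complex.I) • (x : H))
    exact sub_eq_add_neg _ _

lemma aux_kato_chain {R : H →ₗ.[ℂ] H} (hR : IsSelfAdjoint R) (V : R.domain →ₗ[ℂ] H)
    (hVsymm : ∀ x y : R.domain, ⟪V x, (y : H)⟫_ℂ = ⟪(x : H), V y⟫_ℂ)
    {α β : ℝ} (hα0 : 0 ≤ α) (hβ : 0 ≤ β)
    (hbd : ∀ t : ℝ, 0 ≤ t → t ≤ 1 → ∀ x : R.domain,
      ‖V x‖ ≤ α * ‖R.toFun x + ((t : ℂ)) • V x‖ + β * ‖(x : H)‖) :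
    IsSelfAdjoint (LinearPMap.mk R.domain (R.toFun + V)) := by
  set n : ℕ := Nat.ceil α + 1 with hn
  have hnval : (n : ℝ) = (Nat.ceil α : ℝ) + 1 := by rw [hn]; push_cast; ring
  have hαn : α < (n : ℝ) := by
    have h1 := Nat.le_ceil α
    rw [hnval]
    linarith
  have hn0 : 0 < (n : ℝ) := by positivity
  have claim : ∀ k : ℕ, k ≤ n →
      IsSelfAdjoint (LinearPMap.mk R.domain
        (R.toFun + (((((k : ℝ) / (n : ℝ)) : ℝ) : ℂ)) • V)) := by
    intro k
    induction k with
    | zero =>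
      intro _
      have h0 : (((((0 : ℕ) : ℝ) / (n : ℝ)) : ℝ) : ℂ) = 0 := by norm_num
      rw [h0, zero_smul, add_zero]
      exact hR
    | succ k ih =>
      intro hk1
      have hk : k ≤ n := Nat.le_of_succ_le hk1
      have hsa := ih hk
      have hc0 : (0 : ℝ) ≤ (k : ℝ) / (n : ℝ) := by positivity
      have hc1 : (k : ℝ) / (n : ℝ) ≤ 1 := by
        rw [div_le_one hn0]
        exact_mod_cast hk
      set Rk : H →ₗ.[ℂ] H := LinearPMap.mk R.domain
        (R.toFun + (((((k : ℝ) / (n : ℝ)) : ℝ) : ℂ)) • V) with hRk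
      set W : Rk.domain →ₗ[ℂ] H := (((((1 : ℝ) / (n : ℝ)) : ℝ) : ℂ)) • V with hW
      have hWsymm' : ∀ x y : Rk.domain, ⟪W x, (y : H)⟫_ℂ = ⟪(x : H), W y⟫_ℂ := by
        intro x y
        rw [hW]
        simp only [LinearMap.smul_apply]
        rw [inner_smul_left, inner_smul_right, Complex.conj_ofReal]
        rw [hVsymm x y]
      have hRkx : ∀ x : Rk.domain,
          Rk x = R.toFun x + (((((k : ℝ) / (n : ℝ)) : ℝ) : ℂ)) • V x := fun x => rfl
      have hWbd : ∀ x : Rk.domain, ‖W x‖ ≤ (α / n) * ‖Rk x‖ + (β / n) * ‖(x : H)‖ := by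
        intro x
        have hb := hbd ((k : ℝ) / (n : ℝ)) hc0 hc1 x
        have hWx : ‖W x‖ = (1 / (n : ℝ)) * ‖V x‖ := by
          rw [hW]
          simp only [LinearMap.smul_apply]
          rw [norm_smul, Complex.norm_real]
          congr 1
          rw [Real.norm_eq_abs, abs_of_nonneg (by positivity)]
        rw [hWx, hRkx x]
        have h2 : (1 / (n : ℝ)) * ‖V x‖ ≤ (1 / (n : ℝ)) *
            (α * ‖R.toFun x + (((((k : ℝ) / (n : ℝ)) : ℝ) : ℂ)) • V x‖ + β * ‖(x : H)‖) :=
          mul_le_mul_of_nonneg_left hb (by positivity)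
        calc (1 / (n : ℝ)) * ‖V x‖
            ≤ (1 / (n : ℝ)) * (α * ‖R.toFun x + (((((k : ℝ) / (n : ℝ)) : ℝ) : ℂ)) • V x‖
              + β * ‖(x : H)‖) := h2
          _ = (α / n) * ‖R.toFun x + (((((k : ℝ) / (n : ℝ)) : ℝ) : ℂ)) • V x‖
              + (β / n) * ‖(x : H)‖ := by ring
      have hstep := aux_kato_step hsa W hWsymm'
        (α := α / n) (β := β / n)
        (by positivity) (by rw [div_lt_one hn0]; exact hαn) (by positivity) hWbd
      have hsc : (((((k : ℝ) / (n : ℝ)) : ℝ) : ℂ)) + (((((1 : ℝ) / (n : ℝ)) : ℝ) : ℂ))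
          = ((((((k + 1 : ℕ) : ℝ)) / (n : ℝ) : ℝ)) : ℂ) := by
        rw [← Complex.ofReal_add]
        congr 1
        push_cast
        rw [← add_div]
      have heq : LinearPMap.mk Rk.domain (Rk.toFun + W)
          = LinearPMap.mk R.domain
            (R.toFun + ((((((k + 1 : ℕ) : ℝ)) / (n : ℝ) : ℝ) : ℂ)) • V) := by
        refine LinearPMap.ext' ?_
        show (R.toFun + (((((k : ℝ) / (n : ℝ)) : ℝ) : ℂ)) • V) + (((((1 : ℝ) / (n : ℝ)) : ℝ) : ℂ)) • V
          = R.toFun + ((((((k + 1 : ℕ) : ℝ)) / (n : ℝ) : ℝ) : ℂ)) • V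
        rw [add_assoc, ← add_smul, hsc]
      rw [heq] at hstep
      exact hstep
  have hfinal := claim n le_rfl
  have he : ((((n : ℝ) / (n : ℝ)) : ℝ) : ℂ) = 1 := by
    rw [div_self (ne_of_gt hn0)]
    norm_num
  rw [he, one_smul] at hfinal
  exact hfinal

lemma aux_transfer {P Q : H →ₗ.[ℂ] H} (hP : P.IsClosable) (hQ : Q.IsClosable)
    (hdom : (P.domain : Set H) = Q.domain) {K : ℝ} (hK : 0 < K)
    (hest : ∀ {x u v : H}, (x, u) ∈ P.graph → (x, v) ∈ Q.graph → ‖v‖ ≤ K * (‖u‖ + ‖x‖))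
    {x : H} (hx : x ∈ P.closure.domain) :
    ∃ (hxQ : x ∈ Q.closure.domain) (φ ψ χ : ℕ → H),
      (∀ n, (φ n, ψ n) ∈ P.graph ∧ (φ n, χ n) ∈ Q.graph) ∧
      Tendsto φ atTop (𝓝 x) ∧ Tendsto ψ atTop (𝓝 (P.closure ⟨x, hx⟩)) ∧
      Tendsto χ atTop (𝓝 (Q.closure ⟨x, hxQ⟩)) := by
  
  have hxg : ((x : H), P.closure ⟨x, hx⟩) ∈ closure (P.graph : Set (H × H)) := by
    rw [← aux_mem_closure_graph_iff hP]
    exact P.closure.mem_graph ⟨x, hx⟩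
  rw [mem_closure_iff_seq_limit] at hxg
  obtain ⟨f, hf, hft⟩ := hxg
  set φ : ℕ → H := fun n => (f n).1 with hφ
  set ψ : ℕ → H := fun n => (f n).2 with hψ
  have hφt : Tendsto φ atTop (𝓝 x) := (continuous_fst.tendsto _).comp hft
  have hψt : Tendsto ψ atTop (𝓝 (P.closure ⟨x, hx⟩)) := (continuous_snd.tendsto _).comp hft
  have hfg : ∀ n, (φ n, ψ n) ∈ P.graph := fun n => by simpa using hf n
  have hφQ : ∀ n, φ n ∈ Q.domain := by
    intro n
    have h1 : φ n ∈ (P.domain : Set H) := by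
      have h2 := hfg n
      rw [LinearPMap.mem_graph_iff] at h2
      obtain ⟨u, hu1, -⟩ := h2
      have hu1' : (u : H) = φ n := hu1
      rw [← hu1']
      exact u.2
    rw [hdom] at h1
    exact h1
  set χ : ℕ → H := fun n => Q ⟨φ n, hφQ n⟩ with hχ
  have hχg : ∀ n, (φ n, χ n) ∈ Q.graph := fun n => Q.mem_graph ⟨φ n, hφQ n⟩
  have hχc : CauchySeq χ := by
    rw [Metric.cauchySeq_iff]
    intro ε hε
    have hφc := hφt.cauchySeq
    have hψc := hψt.cauchySeq
    rw [Metric.cauchySeq_iff] at hφc hψc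
    have hε' : 0 < ε / (2 * K + 1) := by positivity
    obtain ⟨N1, hN1⟩ := hφc _ hε'
    obtain ⟨N2, hN2⟩ := hψc _ hε'
    refine ⟨max N1 N2, fun m hm n hn => ?_⟩
    have h1 := hN1 m (le_trans (le_max_left _ _) hm) n (le_trans (le_max_left _ _) hn)
    have h2 := hN2 m (le_trans (le_max_right _ _) hm) n (le_trans (le_max_right _ _) hn)
    rw [dist_eq_norm] at h1 h2 ⊢
    have hgp : (φ m - φ n, ψ m - ψ n) ∈ P.graph := by
      have h3 := sub_mem (hfg m) (hfg n)
      simpa [Prod.sub_def] using h3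
    have hgq : (φ m - φ n, χ m - χ n) ∈ Q.graph := by
      have h3 := sub_mem (hχg m) (hχg n)
      simpa [Prod.sub_def] using h3
    have hb := hest hgp hgq
    have h4 : K * (‖ψ m - ψ n‖ + ‖φ m - φ n‖) < K * (ε / (2 * K + 1) + ε / (2 * K + 1)) :=
      mul_lt_mul_of_pos_left (add_lt_add h2 h1) hK
    have h5 : K * (ε / (2 * K + 1) + ε / (2 * K + 1)) ≤ ε := by
      have h6 : K * (ε / (2 * K + 1) + ε / (2 * K + 1)) = (2 * K) * ε / (2 * K + 1) := by
        field_simp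
        ring
      rw [h6, div_le_iff₀ (by positivity : (0:ℝ) < 2 * K + 1)]
      nlinarith
    linarith
  obtain ⟨z, hz⟩ := cauchySeq_tendsto_of_complete hχc
  have hmem : ((x : H), z) ∈ Q.closure.graph := by
    rw [aux_mem_closure_graph_iff hQ, mem_closure_iff_seq_limit]
    exact ⟨fun n => (φ n, χ n), fun n => hχg n, hφt.prodMk_nhds hz⟩
  have hmem2 := hmem
  rw [LinearPMap.mem_graph_iff] at hmem2
  obtain ⟨u, hu1, hu2⟩ := hmem2
  simp only at hu1 hu2
  have hxQ : x ∈ Q.closure.domain := hu1 ▸ u.2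
  refine ⟨hxQ, φ, ψ, χ, fun n => ⟨hfg n, hχg n⟩, hφt, hψt, ?_⟩
  have hval : Q.closure ⟨x, hxQ⟩ = z :=
    Q.closure.mem_graph_snd_inj (Q.closure.mem_graph ⟨x, hxQ⟩) hmem rfl
  rw [hval]
  exact hz

lemma aux_main {S T : H →ₗ.[ℂ] H} (hSsymm : S.IsSymmetricOp) (hTsymm : T.IsSymmetricOp)
    (hdom : (S.domain : Set H) = T.domain)
    {a b : ℝ} (ha0 : 0 ≤ a) (ha1 : a < 1) (hb : 0 ≤ b)
    (hbound : ∀ {x u v : H}, (x, u) ∈ S.graph → (x, v) ∈ T.graph →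
      ‖u - v‖ ≤ a * (‖u‖ + ‖v‖) + b * ‖x‖)
    (hS : IsSelfAdjoint S.closure) :
    IsSelfAdjoint T.closure ∧ S.closure.domain = T.closure.domain := by
  
  have h1a : 0 < 1 - a := by linarith
  have hdenseSc : Dense (S.closure.domain : Set H) := hS.dense_domain
  have hdenseS : Dense (S.domain : Set H) := by
    rw [← dense_closure]
    exact hdenseSc.mono (aux_closure_dom_subset S)
  have hdenseT : Dense (T.domain : Set H) := hdom ▸ hdenseS
  have hSc : S.IsClosable := aux_symm_isClosable hdenseS hSsymm
  have hTc : T.IsClosable := aux_symm_isClosable hdenseT hTsymm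
  set K : ℝ := (1 + a + b) / (1 - a) with hKdef
  have hK : 0 < K := by rw [hKdef]; positivity
  have hestST : ∀ {x u v : H}, (x, u) ∈ S.graph → (x, v) ∈ T.graph →
      ‖v‖ ≤ K * (‖u‖ + ‖x‖) := by
    intro x u v hu hv
    have hbd := hbound hu hv
    have h2 : ‖v‖ ≤ ‖u‖ + ‖u - v‖ := by
      calc ‖v‖ = ‖u - (u - v)‖ := by congr 1; abel
        _ ≤ ‖u‖ + ‖u - v‖ := norm_sub_le _ _
    rw [hKdef, div_mul_eq_mul_div, le_div_iff₀ h1a]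
    nlinarith [norm_nonneg u, norm_nonneg x, norm_nonneg v]
  have hestTS : ∀ {x u v : H}, (x, u) ∈ T.graph → (x, v) ∈ S.graph →
      ‖v‖ ≤ K * (‖u‖ + ‖x‖) := by
    intro x u v hu hv
    have hbd := hbound hv hu
    have h2 : ‖v‖ ≤ ‖u‖ + ‖v - u‖ := by
      calc ‖v‖ = ‖u + (v - u)‖ := by congr 1; abel
        _ ≤ ‖u‖ + ‖v - u‖ := norm_add_le _ _
    rw [hKdef, div_mul_eq_mul_div, le_div_iff₀ h1a]
    nlinarith [norm_nonneg u, norm_nonneg x, norm_nonneg v]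
  have hdomeq : S.closure.domain = T.closure.domain := by
    ext y
    constructor
    · intro hy
      obtain ⟨h, -⟩ := aux_transfer hSc hTc hdom hK hestST hy
      exact h
    · intro hy
      obtain ⟨h, -⟩ := aux_transfer hTc hSc hdom.symm hK hestTS hy
      exact h
  have hle : S.closure.domain ≤ T.closure.domain := le_of_eq hdomeq
  set incl : S.closure.domain →ₗ[ℂ] T.closure.domain := Submodule.inclusion hle with hincl
  have hinclcoe : ∀ x : S.closure.domain, ((incl x : H)) = (x : H) := fun x => rfl
  set V : S.closure.domain →ₗ[ℂ] H := ((T.closure.toFun.comp incl) - S.closure.toFun) with hV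
  have hVx : ∀ x : S.closure.domain, V x = T.closure (incl x) - S.closure x := fun x => rfl
  have hTx : ∀ x : S.closure.domain, T.closure (incl x) = S.closure x + V x := by
    intro x
    rw [hVx]
    abel
  have hbound' : ∀ x : S.closure.domain,
      ‖S.closure x - T.closure (incl x)‖
        ≤ a * (‖S.closure x‖ + ‖T.closure (incl x)‖) + b * ‖(x : H)‖ := by
    intro x
    obtain ⟨hxQ, φ, ψ, χ, hgr, hφt, hψt, hχt⟩ := aux_transfer hSc hTc hdom hK hestST x.2
    have hT'e : T.closure ⟨(x : H), hxQ⟩ = T.closure (incl x) := by congr 1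
    rw [hT'e] at hχt
    have hψt' : Tendsto ψ atTop (𝓝 (S.closure x)) := hψt
    have hn : ∀ n, ‖ψ n - χ n‖ ≤ a * (‖ψ n‖ + ‖χ n‖) + b * ‖φ n‖ :=
      fun n => hbound (hgr n).1 (hgr n).2
    have hL : Tendsto (fun n => ‖ψ n - χ n‖) atTop
        (𝓝 ‖S.closure x - T.closure (incl x)‖) := (hψt'.sub hχt).norm
    have hRt : Tendsto (fun n => a * (‖ψ n‖ + ‖χ n‖) + b * ‖φ n‖) atTop
        (𝓝 (a * (‖S.closure x‖ + ‖T.closure (incl x)‖) + b * ‖(x : H)‖)) :=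
      ((tendsto_const_nhds.mul ((hψt'.norm).add (hχt.norm))).add
        (tendsto_const_nhds.mul hφt.norm))
    exact le_of_tendsto_of_tendsto' hL hRt hn
  have hBsymm : S.closure.IsSymmetricOp := aux_isSymm_of_selfAdjoint hS
  have hT'symm : T.closure.IsSymmetricOp := aux_closure_symm hTsymm hTc
  have hVsymm : ∀ x y : S.closure.domain, ⟪V x, (y : H)⟫_ℂ = ⟪(x : H), V y⟫_ℂ := by
    intro x y
    rw [hVx x, hVx y, inner_sub_left, inner_sub_right]
    have h2 : ⟪T.closure (incl x), (y : H)⟫_ℂ = ⟪(x : H), T.closure (incl y)⟫_ℂ :=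
      hT'symm (incl x) (incl y)
    rw [h2, hBsymm x y]
  have hα0 : (0 : ℝ) ≤ 2 * a / (1 - a) := by positivity
  have hβ0 : (0 : ℝ) ≤ b / (1 - a) := by positivity
  have hchainbd : ∀ t : ℝ, 0 ≤ t → t ≤ 1 → ∀ x : S.closure.domain,
      ‖V x‖ ≤ (2 * a / (1 - a)) * ‖S.closure.toFun x + ((t : ℂ)) • V x‖
        + (b / (1 - a)) * ‖(x : H)‖ := by
    intro t ht0 ht1 x
    have hbx := hbound' x
    have hnv : ‖S.closure x - T.closure (incl x)‖ = ‖V x‖ := by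
      rw [hVx, norm_sub_rev]
    rw [hnv, hTx x] at hbx
    have htn : ‖((t : ℂ)) • V x‖ = t * ‖V x‖ := by
      rw [norm_smul, Complex.norm_real, Real.norm_eq_abs, abs_of_nonneg ht0]
    have h1tn : ‖(((1 - t : ℝ) : ℂ)) • V x‖ = (1 - t) * ‖V x‖ := by
      rw [norm_smul, Complex.norm_real, Real.norm_eq_abs, abs_of_nonneg (by linarith)]
    have h1 : ‖S.closure x‖ ≤ ‖S.closure.toFun x + ((t : ℂ)) • V x‖ + t * ‖V x‖ := by
      calc ‖S.closure x‖
          = ‖(S.closure.toFun x + ((t : ℂ)) • V x) - ((t : ℂ)) • V x‖ := by congr 1; abel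
        _ ≤ ‖S.closure.toFun x + ((t : ℂ)) • V x‖ + ‖((t : ℂ)) • V x‖ := norm_sub_le _ _
        _ = ‖S.closure.toFun x + ((t : ℂ)) • V x‖ + t * ‖V x‖ := by rw [htn]
    have h2 : ‖S.closure x + V x‖
        ≤ ‖S.closure.toFun x + ((t : ℂ)) • V x‖ + (1 - t) * ‖V x‖ := by
      calc ‖S.closure x + V x‖
          = ‖(S.closure.toFun x + ((t : ℂ)) • V x) + (((1 - t : ℝ) : ℂ)) • V x‖ := by
            congr 1
            rw [LinearPMap.toFun_eq_coe]
            push_cast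
            module
        _ ≤ ‖S.closure.toFun x + ((t : ℂ)) • V x‖ + ‖(((1 - t : ℝ) : ℂ)) • V x‖ :=
            norm_add_le _ _
        _ = ‖S.closure.toFun x + ((t : ℂ)) • V x‖ + (1 - t) * ‖V x‖ := by rw [h1tn]
    rw [div_mul_eq_mul_div, div_mul_eq_mul_div, ← add_div, le_div_iff₀ h1a]
    nlinarith [norm_nonneg (V x), norm_nonneg (S.closure x),
      norm_nonneg (S.closure x + V x), norm_nonneg ((x : H)),
      norm_nonneg (S.closure.toFun x + ((t : ℂ)) • V x)]
  have hchain := aux_kato_chain hS V hVsymm hα0 hβ0 hchainbd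
  have hfin : LinearPMap.mk S.closure.domain (S.closure.toFun + V) = T.closure := by
    refine LinearPMap.ext ?_ ?_
    · exact hdomeq
    intro x hx hy
    show S.closure.toFun ⟨x, hx⟩ + V ⟨x, hx⟩ = T.closure ⟨x, hy⟩
    have h3 : S.closure ⟨x, hx⟩ + V ⟨x, hx⟩ = T.closure (incl ⟨x, hx⟩) := (hTx ⟨x, hx⟩).symm
    have h4 : incl ⟨x, hx⟩ = ⟨x, hy⟩ := rfl
    rw [← h4]
    exact h3
  rw [hfin] at hchain
  exact ⟨hchain, hdomeq⟩

lemma aux_graph_domRestrict {A : H →ₗ.[ℂ] H} {D : Submodule ℂ H} (hDA : D ≤ A.domain)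
    {x y : H} : (x, y) ∈ (A.domRestrict D).graph ↔
      ∃ (h1 : x ∈ D) (h2 : x ∈ A.domain), A ⟨x, h2⟩ = y := by
  
  rw [LinearPMap.mem_graph_iff]
  constructor
  · rintro ⟨u, hu1, hu2⟩
    have hu1' : (u : H) = x := hu1
    have hmem : (u : H) ∈ D ⊓ A.domain := u.2
    rw [Submodule.mem_inf] at hmem
    refine ⟨hu1' ▸ hmem.1, hu1' ▸ hmem.2, ?_⟩
    have h4 : (A.domRestrict D) u = A ⟨x, hu1' ▸ hmem.2⟩ :=
      LinearPMap.domRestrict_apply hu1' 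
    have hu2' : (A.domRestrict D) u = y := hu2
    rw [← hu2', h4]
  · rintro ⟨h1, h2, h3⟩
    refine ⟨⟨x, Submodule.mem_inf.mpr ⟨h1, h2⟩⟩, rfl, ?_⟩
    have h4 : (A.domRestrict D) ⟨x, Submodule.mem_inf.mpr ⟨h1, h2⟩⟩ = A ⟨x, h2⟩ :=
      LinearPMap.domRestrict_apply rfl
    rw [h4]
    exact h3

lemma aux_domRestrict_symm {A : H →ₗ.[ℂ] H} (hAsymm : A.IsSymmetricOp) (D : Submodule ℂ H) :
    (A.domRestrict D).IsSymmetricOp := by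
  
  intro x y
  have hx2 := Submodule.mem_inf.mp x.2
  have hy2 := Submodule.mem_inf.mp y.2
  have hx : (A.domRestrict D) x = A ⟨(x : H), hx2.2⟩ := LinearPMap.domRestrict_apply rfl
  have hy : (A.domRestrict D) y = A ⟨(y : H), hy2.2⟩ := LinearPMap.domRestrict_apply rfl
  rw [hx, hy]
  exact hAsymm ⟨(x : H), hx2.2⟩ ⟨(y : H), hy2.2⟩

end Aux

/-- Let `A` and `C` be symmetric operators on a Hilbert space and `D` a
linear subspace contained in both domains. If there are constants `0 ≤ a < 1` and `b ≥ 0`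
such that `‖(A−C)φ‖ ≤ a(‖Aφ‖ + ‖Cφ‖) + b‖φ‖` for all `φ ∈ D`, then `A` is essentially
self-adjoint on `D` iff `C` is, and in that case the closures of the restrictions of `A` and
`C` to `D` have equal domains. -/
theorem stmt3 (A C : H →ₗ.[ℂ] H)
    (hAdense : Dense (A.domain : Set H)) (hCdense : Dense (C.domain : Set H))
    (hAsymm : A.IsSymmetricOp) (hCsymm : C.IsSymmetricOp)
    (D : Submodule ℂ H) (hDA : D ≤ A.domain) (hDC : D ≤ C.domain)
    (a b : ℝ) (ha0 : 0 ≤ a) (ha1 : a < 1) (hb : 0 ≤ b)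
    (hbound : ∀ (φ : H) (hφA : φ ∈ A.domain) (hφC : φ ∈ C.domain), φ ∈ D →
      ‖A ⟨φ, hφA⟩ - C ⟨φ, hφC⟩‖ ≤ a * (‖A ⟨φ, hφA⟩‖ + ‖C ⟨φ, hφC⟩‖) + b * ‖φ‖) :
    (EssentiallySelfAdjointOn A D ↔ EssentiallySelfAdjointOn C D) ∧
    (EssentiallySelfAdjointOn A D →
      ((A.domRestrict D).closure).domain = ((C.domRestrict D).closure).domain) := by
  
  have hdomset : (((A.domRestrict D).domain : Submodule ℂ H) : Set H)
      = (((C.domRestrict D).domain : Submodule ℂ H) : Set H) := by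
    have h1 : D ⊓ A.domain = D := inf_eq_left.mpr hDA
    have h2 : D ⊓ C.domain = D := inf_eq_left.mpr hDC
    rw [LinearPMap.domRestrict_domain, LinearPMap.domRestrict_domain, h1, h2]
  have hSsymm := aux_domRestrict_symm hAsymm D
  have hTsymm := aux_domRestrict_symm hCsymm D
  have hbAC : ∀ {x u v : H}, (x, u) ∈ (A.domRestrict D).graph →
      (x, v) ∈ (C.domRestrict D).graph → ‖u - v‖ ≤ a * (‖u‖ + ‖v‖) + b * ‖x‖ := by
    intro x u v hu hv
    rw [aux_graph_domRestrict hDA] at hu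
    rw [aux_graph_domRestrict hDC] at hv
    obtain ⟨h1, h2, h3⟩ := hu
    obtain ⟨h1', h2', h3'⟩ := hv
    rw [← h3, ← h3']
    exact hbound x h2 h2' h1
  have hbCA : ∀ {x u v : H}, (x, u) ∈ (C.domRestrict D).graph →
      (x, v) ∈ (A.domRestrict D).graph → ‖u - v‖ ≤ a * (‖u‖ + ‖v‖) + b * ‖x‖ := by
    intro x u v hu hv
    rw [norm_sub_rev, add_comm ‖u‖ ‖v‖]
    exact hbAC hv hu
  constructor
  · constructor
    · intro h
      exact (aux_main hSsymm hTsymm hdomset ha0 ha1 hb hbAC h).1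
    · intro h
      exact (aux_main hTsymm hSsymm hdomset.symm ha0 ha1 hb hbCA h).1
  · intro h
    exact (aux_main hSsymm hTsymm hdomset ha0 ha1 hb hbAC h).2
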